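/- Suppose that for all integers k ≥ 2 and p ≥ 2, every r(p,k)-spread family of k-element sets of size at least r(p,k)^k contains p pairwise disjoint sets, where r(p,k) = C·p·log k for a constant C ≥ 4. Then for all p ≥ 2 and k ≥ 1, any family of more than (C·p·log k + [k=1]·p)^k distinct k-element sets contains a sunflower with p petals. -/

import Mathlib

/-- A sunflower with `p` petals: `p` sets whose pairwise intersections are all
equal to a common core. -/
def IsSunflower {α : Type*} [DecidableEq α] (p : ℕ) (P : Finset (Finset α)) : Prop :=
  P.card = p ∧ ∃ core : Finset α, ∀ A ∈ P, ∀ B ∈ P, A ≠ B → A ∩ B = core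

open scoped Classical in
/-- A family of `k`-element sets is `r`-spread if every non-empty set `T` is
contained in at most `r^(k - |T|)` members. -/
def IsSpread {α : Type*} (r : ℝ) (k : ℕ) (S : Finset (Finset α)) : Prop :=
  ∀ T : Finset α, T.Nonempty →
    ((S.filter fun A => T ⊆ A).card : ℝ) ≤ r ^ (k - T.card)

set_option maxHeartbeats 1000000 in
open scoped Classical in
/-- Reduction of the sunflower theorem to the spread lemma: if every
`C·p·log k`-spread family of `k`-sets of size at least `(C·p·log k)^k` contains
`p` pairwise disjoint sets, then any family of more than
`(C·p·log k + [k=1]·p)^k` distinct `k`-element sets contains a sunflower with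
`p` petals. -/
theorem sunflower_of_spread_lemma {α : Type*} [DecidableEq α] (C : ℝ) (hC : 4 ≤ C)
    (hspread : ∀ k p : ℕ, 2 ≤ k → 2 ≤ p → ∀ S : Finset (Finset α),
      (∀ A ∈ S, A.card = k) → IsSpread (C * p * Real.log k) k S →
      (C * p * Real.log k) ^ k ≤ (S.card : ℝ) →
      ∃ P ⊆ S, P.card = p ∧ (P : Set (Finset α)).PairwiseDisjoint id) :
    ∀ p k : ℕ, 2 ≤ p → 1 ≤ k → ∀ S : Finset (Finset α),
      (∀ A ∈ S, A.card = k) →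
      (C * p * Real.log k + (if k = 1 then (p : ℝ) else 0)) ^ k < (S.card : ℝ) →
      ∃ P ⊆ S, IsSunflower p P := by
  classical
  intro p k hp
  induction k using Nat.strong_induction_on with
  | _ k IH =>
  intro hk S hcardS hlt
  have hp2 : (2:ℝ) ≤ (p:ℝ) := by exact_mod_cast hp
  rcases Nat.lt_or_ge k 2 with hk2 | hk2
  · -- case k = 1
    have hk1 : k = 1 := by omega
    subst hk1
    simp only [Nat.cast_one, Real.log_one, mul_zero, zero_add, if_pos rfl, pow_one] at hlt
    have hps : p ≤ S.card := by exact_mod_cast hlt.le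
    obtain ⟨P, hPS, hPc⟩ := Finset.exists_subset_card_eq hps
    refine ⟨P, hPS, hPc, ∅, ?_⟩
    intro A hA B hB hAB
    obtain ⟨a, rfl⟩ := Finset.card_eq_one.mp (hcardS A (hPS hA))
    obtain ⟨b, rfl⟩ := Finset.card_eq_one.mp (hcardS B (hPS hB))
    have hab : a ≠ b := by rintro rfl; exact hAB rfl
    exact Finset.singleton_inter_of_notMem (by simpa using hab)
  · -- case 2 ≤ k
    have hkne : k ≠ 1 := by omega
    rw [if_neg hkne, add_zero] at hlt
    have hlog2 : (0.6931471803:ℝ) < Real.log 2 := Real.log_two_gt_d9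
    have hlogk : Real.log 2 ≤ Real.log k := by
      apply Real.log_le_log (by norm_num)
      exact_mod_cast hk2
    have hlogk' : (0.69:ℝ) ≤ Real.log k := by linarith
    have hCp : (8:ℝ) ≤ C * p := by nlinarith
    have hr1 : (1:ℝ) < C * p * Real.log k := by nlinarith
    by_cases hsp : IsSpread (C * p * Real.log k) k S
    · obtain ⟨P, hPS, hPc, hPd⟩ := hspread k p hk2 hp S hcardS hsp hlt.le
      refine ⟨P, hPS, hPc, ∅, ?_⟩
      intro A hA B hB hAB
      exact Finset.disjoint_iff_inter_eq_empty.mp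
        (hPd (Finset.mem_coe.mpr hA) (Finset.mem_coe.mpr hB) hAB)
    · simp only [IsSpread, not_forall, not_le] at hsp
      obtain ⟨T, hTne, hTlt₀⟩ := hsp
      set F := S.filter (fun A => T ⊆ A) with hFdef
      have hTlt : (C * p * Real.log k) ^ (k - T.card) < (F.card : ℝ) := by
        rw [hFdef]; convert hTlt₀ using 4 <;> rfl
      have hrpos : (0:ℝ) < C * p * Real.log k := by linarith
      have hFpos : 0 < F.card := by
        by_contra h
        push_neg at h
        interval_cases hc : F.card
        · simp only [Nat.cast_zero] at hTlt
          exact absurd hTlt (not_lt.mpr (pow_nonneg hrpos.le _))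
      obtain ⟨A₀, hA₀⟩ := Finset.card_pos.mp hFpos
      have hA₀S : A₀ ∈ S := (Finset.mem_filter.mp hA₀).1
      have hTA₀ : T ⊆ A₀ := (Finset.mem_filter.mp hA₀).2
      have ht1 : 0 < T.card := Finset.card_pos.mpr hTne
      have htk : T.card ≤ k := (hcardS A₀ hA₀S) ▸ Finset.card_le_card hTA₀
      have htlt : T.card < k := by
        rcases lt_or_eq_of_le htk with h | h
        · exact h
        · exfalso
          rw [h, Nat.sub_self, pow_zero] at hTlt
          have h2 : 1 < F.card := by exact_mod_cast hTlt
          obtain ⟨a, ha, b, hb, hne⟩ := Finset.one_lt_card.mp h2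
          have ha' : T = a := Finset.eq_of_subset_of_card_le
            (Finset.mem_filter.mp ha).2
            (by rw [hcardS a (Finset.mem_filter.mp ha).1, h])
          have hb' : T = b := Finset.eq_of_subset_of_card_le
            (Finset.mem_filter.mp hb).2
            (by rw [hcardS b (Finset.mem_filter.mp hb).1, h])
          exact hne (ha' ▸ hb')
      set S' := F.image (fun A => A \ T) with hS'def
      have hinj : Set.InjOn (fun A => A \ T) F := by
        intro a ha b hb hab
        have hta : T ⊆ a := (Finset.mem_filter.mp ha).2
        have htb : T ⊆ b := (Finset.mem_filter.mp hb).2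
        calc a = a \ T ∪ T := (Finset.sdiff_union_of_subset hta).symm
          _ = b \ T ∪ T := by simp only at hab; rw [hab]
          _ = b := Finset.sdiff_union_of_subset htb
      have hS'card : S'.card = F.card := Finset.card_image_of_injOn hinj
      have hS'sets : ∀ B ∈ S', B.card = k - T.card := by
        intro B hB
        obtain ⟨A, hA, rfl⟩ := Finset.mem_image.mp hB
        rw [Finset.card_sdiff_of_subset (Finset.mem_filter.mp hA).2,
          hcardS A (Finset.mem_filter.mp hA).1]
      have hbase0 : 0 ≤ C * p * Real.log (k - T.card : ℕ) + (if k - T.card = 1 then (p:ℝ) else 0) := by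
        have h1 : (0:ℝ) ≤ Real.log (k - T.card : ℕ) := Real.log_nonneg (by
          have : 1 ≤ k - T.card := by omega
          exact_mod_cast this)
        have h2 : (0:ℝ) ≤ C * p * Real.log (k - T.card : ℕ) := by positivity
        split_ifs with h
        · linarith
        · linarith
      have hbase : C * p * Real.log (k - T.card : ℕ) + (if k - T.card = 1 then (p:ℝ) else 0) ≤ C * p * Real.log k := by
        split_ifs with h
        · rw [h]
          simp only [Nat.cast_one, Real.log_one, mul_zero, zero_add]
          nlinarith
        · have : Real.log (k - T.card : ℕ) ≤ Real.log k := by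
            apply Real.log_le_log (by exact_mod_cast (by omega : 0 < k - T.card))
            exact_mod_cast (by omega : k - T.card ≤ k)
          nlinarith
      have hlt' : (C * p * Real.log (k - T.card : ℕ) + (if k - T.card = 1 then (p:ℝ) else 0)) ^ (k - T.card) < (S'.card : ℝ) := by
        calc (C * p * Real.log (k - T.card : ℕ) + (if k - T.card = 1 then (p:ℝ) else 0)) ^ (k - T.card)
            ≤ (C * p * Real.log k) ^ (k - T.card) := pow_le_pow_left₀ hbase0 hbase _
          _ < (F.card : ℝ) := hTlt
          _ = (S'.card : ℝ) := by rw [hS'card]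
      obtain ⟨P', hP'S', hP'card, c, hc⟩ := IH (k - T.card) (by omega) (by omega) S' hS'sets hlt'
      have hdisjT : ∀ B ∈ P', Disjoint B T := by
        intro B hB
        obtain ⟨A, _, rfl⟩ := Finset.mem_image.mp (hP'S' hB)
        exact Finset.sdiff_disjoint
      have hcancel : ∀ B ∈ P', (B ∪ T) \ T = B := by
        intro B hB
        rw [Finset.union_sdiff_right, Finset.sdiff_eq_self_of_disjoint (hdisjT B hB)]
      have hinj2 : Set.InjOn (fun B => B ∪ T) P' := by
        intro a ha b hb hab
        simp only at hab
        rw [← hcancel a ha, ← hcancel b hb, hab]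
      refine ⟨P'.image (fun B => B ∪ T), ?_, ?_, c ∪ T, ?_⟩
      · intro X hX
        obtain ⟨B, hB, rfl⟩ := Finset.mem_image.mp hX
        obtain ⟨A, hAF, hAB⟩ := Finset.mem_image.mp (hP'S' hB)
        have : B ∪ T = A := by
          rw [← hAB, Finset.sdiff_union_of_subset (Finset.mem_filter.mp hAF).2]
        rw [this]
        exact (Finset.mem_filter.mp hAF).1
      · rw [Finset.card_image_of_injOn hinj2, hP'card]
      · intro X hX Y hY hXY
        obtain ⟨B₁, hB₁, rfl⟩ := Finset.mem_image.mp hX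
        obtain ⟨B₂, hB₂, rfl⟩ := Finset.mem_image.mp hY
        have hne : B₁ ≠ B₂ := by rintro rfl; exact hXY rfl
        have hcore := hc B₁ hB₁ B₂ hB₂ hne
        ext a
        simp only [Finset.mem_inter, Finset.mem_union, ← hcore]
        tauto
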